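/- When K is finite-dimensional, the Möbius-type map η(Z) = (I - AA*)^{-1/2}(Z + A)(I + A*Z)^{-1}(I - A*A)^{1/2} on the open unit ball of L(K,H) is continuous with respect to the weak operator topology. -/

import Mathlib

open ContinuousLinearMap

/-- The Möbius-type transformation
`η(Z) = (I - AA*)^{-1/2} (Z + A) (I + A*Z)^{-1} (I - A*A)^{1/2}`, where
`P = (I - AA*)^{-1/2}` and `S = (I - A*A)^{1/2}` are given. -/
noncomputable def mobiusEta {H K : Type*}
    [NormedAddCommGroup H] [InnerProductSpace ℂ H] [CompleteSpace H]
    [NormedAddCommGroup K] [InnerProductSpace ℂ K] [CompleteSpace K]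
    (A : K →L[ℂ] H) (P : H →L[ℂ] H) (S : K →L[ℂ] K) (Z : K →L[ℂ] H) : K →L[ℂ] H :=
  P.comp ((Z + A).comp ((Ring.inverse ((1 : K →L[ℂ] K) + (adjoint A).comp Z)).comp S))

set_option maxHeartbeats 1000000

/-- Applying an element of the WOT type copy is the same as applying the underlying map. -/
lemma wotApply_eq {H K : Type*}
    [NormedAddCommGroup H] [InnerProductSpace ℂ H] [CompleteSpace H]
    [NormedAddCommGroup K] [InnerProductSpace ℂ K] [CompleteSpace K]
    (W : K →WOT[ℂ] H) (k : K) : W k = ((ContinuousLinearMapWOT.linearEquiv ℂ : (K →WOT[ℂ] H) ≃ₗ[ℂ] (K →L[ℂ] H)).symm).symm W k := rfl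

/-- When `K` is finite dimensional, the Möbius-type map
`η(Z) = (I - AA*)^{-1/2}(Z + A)(I + A*Z)^{-1}(I - A*A)^{1/2}` on the open unit ball of
`L(K,H)` is continuous with respect to the weak operator topology (on both sides). -/
theorem mobiusEta_continuousOn_wot
    {H K : Type*} [NormedAddCommGroup H] [InnerProductSpace ℂ H] [CompleteSpace H]
    [NormedAddCommGroup K] [InnerProductSpace ℂ K] [CompleteSpace K]
    [FiniteDimensional ℂ K]
    (A : K →L[ℂ] H) (hA : ‖A‖ < 1)
    (P : H →L[ℂ] H) (hP : P.IsPositive)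
    (hP₁ : (P * P) * ((1 : H →L[ℂ] H) - A.comp (adjoint A)) = 1)
    (hP₂ : ((1 : H →L[ℂ] H) - A.comp (adjoint A)) * (P * P) = 1)
    (S : K →L[ℂ] K) (hS : S.IsPositive)
    (hSsq : S * S = (1 : K →L[ℂ] K) - (adjoint A).comp A) :
    ContinuousOn
      (fun W : K →WOT[ℂ] H =>
        ((ContinuousLinearMapWOT.linearEquiv ℂ).symm : (K →L[ℂ] H) ≃ₗ[ℂ] (K →WOT[ℂ] H))
          (mobiusEta A P S (((ContinuousLinearMapWOT.linearEquiv ℂ : (K →WOT[ℂ] H) ≃ₗ[ℂ] (K →L[ℂ] H)) W))))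
      {W : K →WOT[ℂ] H | ‖(ContinuousLinearMapWOT.linearEquiv ℂ : (K →WOT[ℂ] H) ≃ₗ[ℂ] (K →L[ℂ] H)) W‖ < 1} := by
  classical
  change ContinuousOn
      (fun W : K →WOT[ℂ] H =>
        (ContinuousLinearMapWOT.linearEquiv ℂ : (K →WOT[ℂ] H) ≃ₗ[ℂ] (K →L[ℂ] H)).symm
          (mobiusEta A P S (((ContinuousLinearMapWOT.linearEquiv ℂ : (K →WOT[ℂ] H) ≃ₗ[ℂ] (K →L[ℂ] H)).symm).symm W)))
      {W : K →WOT[ℂ] H | ‖((ContinuousLinearMapWOT.linearEquiv ℂ : (K →WOT[ℂ] H) ≃ₗ[ℂ] (K →L[ℂ] H)).symm).symm W‖ < 1}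
  set e := (ContinuousLinearMapWOT.linearEquiv ℂ : (K →WOT[ℂ] H) ≃ₗ[ℂ] (K →L[ℂ] H)).symm with he
  set s : Set (K →WOT[ℂ] H) := {W : K →WOT[ℂ] H | ‖e.symm W‖ < 1} with hs
  haveI : FiniteDimensional ℂ (K →WOT[ℂ] K) :=
    ((ContinuousLinearMapWOT.linearEquiv ℂ : (K →WOT[ℂ] K) ≃ₗ[ℂ] (K →L[ℂ] K)).symm).finiteDimensional
  -- the identity from the WOT type copy to the normed space is continuous in finite dimension
  have hsymm : Continuous fun V : K →WOT[ℂ] K =>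
      ((ContinuousLinearMapWOT.linearEquiv ℂ : (K →WOT[ℂ] K) ≃ₗ[ℂ] (K →L[ℂ] K)).symm).symm V :=
    LinearMap.continuous_of_finiteDimensional
      (((ContinuousLinearMapWOT.linearEquiv ℂ : (K →WOT[ℂ] K) ≃ₗ[ℂ] (K →L[ℂ] K)).symm).symm : (K →WOT[ℂ] K) →ₗ[ℂ] (K →L[ℂ] K))
  -- W ↦ A* ∘ (e.symm W) is continuous into the norm topology
  have hcompA : Continuous fun W : K →WOT[ℂ] H => (adjoint A).comp (e.symm W) := by
    have h1 : Continuous fun W : K →WOT[ℂ] H =>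
        (ContinuousLinearMapWOT.linearEquiv ℂ : (K →WOT[ℂ] K) ≃ₗ[ℂ] (K →L[ℂ] K)).symm ((adjoint A).comp (e.symm W)) := by
      apply ContinuousLinearMapWOT.continuous_of_dual_apply_continuous
      intro x y
      exact ContinuousLinearMapWOT.continuous_dual_apply x (y.comp (adjoint A))
    have := hsymm.comp h1
    exact this
  -- the map T
  set T : (K →WOT[ℂ] H) → (K →L[ℂ] K) := fun W =>
    (Ring.inverse ((1 : K →L[ℂ] K) + (adjoint A).comp (e.symm W))).comp S with hT
  have hTcont : ContinuousOn T s := by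
    intro W hW
    have hnorm : ‖-( (adjoint A).comp (e.symm W))‖ < 1 := by
      rw [norm_neg]
      calc ‖(adjoint A).comp (e.symm W)‖ ≤ ‖adjoint A‖ * ‖e.symm W‖ := opNorm_comp_le _ _
        _ ≤ 1 * ‖e.symm W‖ := by
            gcongr; rw [adjoint.norm_map A]; exact hA.le
        _ < 1 := by rw [one_mul]; exact hW
    have hu : IsUnit ((1 : K →L[ℂ] K) + (adjoint A).comp (e.symm W)) := by
      have := (Units.oneSub (-( (adjoint A).comp (e.symm W))) hnorm).isUnit
      simpa [sub_neg_eq_add] using this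
    obtain ⟨u, hu⟩ := hu
    have hinvAt : ContinuousAt Ring.inverse
        ((1 : K →L[ℂ] K) + (adjoint A).comp (e.symm W)) := by
      rw [← hu]; exact NormedRing.inverse_continuousAt u
    have hadd : ContinuousAt (fun W : K →WOT[ℂ] H =>
        (1 : K →L[ℂ] K) + (adjoint A).comp (e.symm W)) W :=
      ((continuous_const.add hcompA)).continuousAt
    have h2 : ContinuousAt (fun W : K →WOT[ℂ] H =>
        Ring.inverse ((1 : K →L[ℂ] K) + (adjoint A).comp (e.symm W))) W :=
      Filter.Tendsto.comp hinvAt hadd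
    exact ((h2.mul continuousAt_const).continuousWithinAt : _)
  -- main continuity proof
  intro W₀ hW₀
  rw [ContinuousWithinAt, ContinuousLinearMapWOT.tendsto_iff_forall_dual_apply_tendsto]
  intro x y
  -- pointwise description
  have key : ∀ W : K →WOT[ℂ] H,
      y ((e (mobiusEta A P S (e.symm W))) x)
        = (y.comp P) ((e.symm W) (T W x)) + (y.comp P) (A (T W x)) := by
    intro W
    change y ((mobiusEta A P S (e.symm W)) x) = _
    simp [mobiusEta, hT, map_add]
  rw [Filter.tendsto_congr key, key W₀]
  have hg : ContinuousWithinAt (fun W => T W x) s W₀ := by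
    have hx : Continuous fun Q : K →L[ℂ] K => Q x := by
      exact (ContinuousLinearMap.apply ℂ K x).continuous
    exact hx.continuousAt.comp_continuousWithinAt (hTcont W₀ hW₀)
  apply Filter.Tendsto.add
  · -- term ψ ((e.symm W) (T W x))
    have hsplit : ∀ W : K →WOT[ℂ] H,
        (y.comp P) ((e.symm W) (T W x))
          = (y.comp P) ((e.symm W) (T W x - T W₀ x)) + (y.comp P) (W (T W₀ x)) := by
      intro W
      rw [wotApply_eq W (T W₀ x), ← he, ← map_add, ← map_add, sub_add_cancel]
    rw [Filter.tendsto_congr hsplit, hsplit W₀]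
    have h0 : Filter.Tendsto (fun W : K →WOT[ℂ] H =>
        (y.comp P) ((e.symm W) (T W x - T W₀ x))) (nhdsWithin W₀ s) (nhds 0) := by
      apply squeeze_zero_norm' (a := fun W => ‖y.comp P‖ * ‖T W x - T W₀ x‖)
      · filter_upwards [self_mem_nhdsWithin] with W hW
        calc ‖(y.comp P) ((e.symm W) (T W x - T W₀ x))‖
            ≤ ‖y.comp P‖ * ‖(e.symm W) (T W x - T W₀ x)‖ := (y.comp P).le_opNorm _
          _ ≤ ‖y.comp P‖ * (‖e.symm W‖ * ‖T W x - T W₀ x‖) := by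
              gcongr; exact (e.symm W).le_opNorm _
          _ ≤ ‖y.comp P‖ * (1 * ‖T W x - T W₀ x‖) :=
              mul_le_mul_of_nonneg_left
                (mul_le_mul_of_nonneg_right (le_of_lt (hW : ‖e.symm W‖ < 1))
                  (norm_nonneg _)) (norm_nonneg _)
          _ = ‖y.comp P‖ * ‖T W x - T W₀ x‖ := by ring
      · have hsub : Filter.Tendsto (fun W : K →WOT[ℂ] H => T W x - T W₀ x)
            (nhdsWithin W₀ s) (nhds 0) := by
          have hg' : Filter.Tendsto (fun W => (T W) x) (nhdsWithin W₀ s)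
              (nhds ((T W₀) x)) := hg
          have h := hg'.sub (tendsto_const_nhds (x := (T W₀) x))
          simpa only [sub_self] using h
        have h2 := hsub.norm.const_mul ‖y.comp P‖
        simpa using h2
    have h1 : Filter.Tendsto (fun W : K →WOT[ℂ] H => (y.comp P) (W (T W₀ x)))
        (nhdsWithin W₀ s) (nhds ((y.comp P) (W₀ (T W₀ x)))) :=
      ((ContinuousLinearMapWOT.continuous_dual_apply (T W₀ x) (y.comp P)).tendsto
        W₀).mono_left nhdsWithin_le_nhds
    have hadd := h0.add h1
    simpa using hadd
  · -- term ψ (A (T W x))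
    have hc : Continuous fun k : K => (y.comp P) (A k) :=
      ((y.comp P).comp A).continuous
    exact (hc.continuousAt.tendsto.comp hg : _)
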